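/- Let G be a bipartite graph with vertex classes X and Y, with no isolated vertices in X. Let F = {N(y) : y ∈ Y} and let ⟨F⟩ be the union-closed family generated by F (all unions of subfamilies of F, including the empty union). Then a vertex x ∈ X lies in at most half of the maximal stable sets of G if and only if x lies in at least half of the members of ⟨F⟩. -/

import Mathlib

/-- A stable (independent) set of vertices. -/
def IsStable {V : Type*} (G : SimpleGraph V) (S : Finset V) : Prop :=
  ∀ a ∈ S, ∀ b ∈ S, ¬ G.Adj a b

/-- A maximal stable set. -/
def IsMaxStable {V : Type*} (G : SimpleGraph V) (S : Finset V) : Prop :=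
  IsStable G S ∧ ∀ T : Finset V, IsStable G T → S ⊆ T → S = T

/-- The number of maximal stable sets of `G`. -/
noncomputable def numMaxStable {V : Type*} (G : SimpleGraph V) : ℕ :=
  Set.ncard {S : Finset V | IsMaxStable G S}

/-- The number of maximal stable sets of `G` containing `v`. -/
noncomputable def numMaxStableCont {V : Type*} (G : SimpleGraph V) (v : V) : ℕ :=
  Set.ncard {S : Finset V | IsMaxStable G S ∧ v ∈ S}

/-- The neighborhood of a set of vertices. -/
def nbhdSet {V : Type*} (G : SimpleGraph V) (P : Set V) : Set V :=
  {w | ∃ p ∈ P, G.Adj p w}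

/-- A pendant vertex: a vertex of degree exactly 1. -/
def IsPendant {V : Type*} (G : SimpleGraph V) (u : V) : Prop :=
  ∃! w, G.Adj u w

/-- A 2-layered vertex: every neighbor is adjacent to some pendant vertex. -/
def TwoLayered {V : Type*} (G : SimpleGraph V) (v : V) : Prop :=
  ∀ w, G.Adj v w → ∃ p, G.Adj w p ∧ IsPendant G p

/-- A maximal stable set of the subgraph of `G` induced on the vertex set `A`. -/
def IsMaxStableIn {V : Type*} (G : SimpleGraph V) (A : Set V) (S : Finset V) : Prop :=
  ↑S ⊆ A ∧ IsStable G S ∧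
    ∀ T : Finset V, ↑T ⊆ A → IsStable G T → S ⊆ T → S = T

set_option linter.unusedSectionVars false
section aux
variable {V : Type*} [Fintype V] [DecidableEq V] {G : SimpleGraph V} {X Y : Set V}
variable (hdisj : Disjoint X Y) (hcov : X ∪ Y = Set.univ)
variable (hbip : ∀ a b, G.Adj a b → (a ∈ X ∧ b ∈ Y) ∨ (a ∈ Y ∧ b ∈ X))

include hdisj hbip in
lemma adj_X_Y {a b : V} (ha : a ∈ X) (hab : G.Adj a b) : b ∈ Y := by
  rcases hbip a b hab with ⟨_, h⟩ | ⟨h, _⟩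
  · exact h
  · exact absurd ha (Set.disjoint_right.1 hdisj h)

include hdisj hbip in
lemma adj_Y_X {a b : V} (ha : a ∈ Y) (hab : G.Adj a b) : b ∈ X := by
  rcases hbip a b hab with ⟨h, _⟩ | ⟨_, h⟩
  · exact absurd ha (Set.disjoint_right.1 hdisj.symm h)
  · exact h

/-- maximality gives a neighbor for any vertex outside. -/
lemma maxStable_neighbor {S : Finset V} (hS : IsMaxStable G S) {v : V} (hv : v ∉ S) :
    ∃ b ∈ S, G.Adj v b := by
  by_contra hcon
  push_neg at hcon
  have hstab : IsStable G (insert v S) := by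
    intro a ha b hb hab
    simp only [Finset.mem_insert] at ha hb
    rcases ha with rfl | ha <;> rcases hb with rfl | hb
    · exact G.loopless.irrefl _ hab
    · exact hcon b hb hab
    · exact hcon a ha hab.symm
    · exact hS.1 a ha b hb hab
  have := hS.2 _ hstab (Finset.subset_insert _ _)
  exact hv (this ▸ Finset.mem_insert_self v S)

include hdisj hbip in
lemma nbhd_eq_compl {S : Finset V} (hS : IsMaxStable G S) :
    nbhdSet G (↑S ∩ Y) = X \ ↑S := by
  ext a
  constructor
  · rintro ⟨p, ⟨hpS, hpY⟩, hpa⟩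
    refine ⟨adj_Y_X hdisj hbip hpY hpa, fun haS => hS.1 p hpS a haS hpa⟩
  · rintro ⟨haX, haS⟩
    obtain ⟨b, hbS, hab⟩ := maxStable_neighbor hS haS
    exact ⟨b, ⟨hbS, adj_X_Y hdisj hbip haX hab⟩, hab.symm⟩

include hdisj hbip in
lemma inter_Y_eq {S : Finset V} (hS : IsMaxStable G S) :
    (↑S : Set V) ∩ Y = Y \ nbhdSet G (↑S ∩ X) := by
  ext y
  constructor
  · rintro ⟨hyS, hyY⟩
    refine ⟨hyY, ?_⟩
    rintro ⟨p, ⟨hpS, hpX⟩, hpy⟩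
    exact hS.1 p hpS y hyS hpy
  · rintro ⟨hyY, hyN⟩
    refine ⟨?_, hyY⟩
    by_contra hyS
    obtain ⟨b, hbS, hab⟩ := maxStable_neighbor hS hyS
    exact hyN ⟨b, ⟨hbS, adj_Y_X hdisj hbip hyY hab⟩, hab.symm⟩

include hdisj hbip in
lemma fam_subset_X {A Y' : Set V} (hY' : Y' ⊆ Y) (hA : A = nbhdSet G Y') : A ⊆ X := by
  rintro a ha
  rw [hA] at ha
  obtain ⟨p, hp, hpa⟩ := ha
  exact adj_Y_X hdisj hbip (hY' hp) hpa

include hdisj hcov hbip in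
lemma exists_maxStable {A Y' : Set V} (hY' : Y' ⊆ Y) (hA : A = nbhdSet G Y') :
    ∃ S : Finset V, IsMaxStable G S ∧ nbhdSet G (↑S ∩ Y) = A := by
  classical
  set T : Set V := X \ A with hT
  set W : Set V := Y \ nbhdSet G T with hW
  set S : Finset V := (T ∪ W).toFinite.toFinset with hS
  have hSc : (↑S : Set V) = T ∪ W := Set.Finite.coe_toFinset _
  have hmem : ∀ v, v ∈ S ↔ v ∈ T ∪ W := fun v => Set.Finite.mem_toFinset _
  have hmax : IsMaxStable G S := by
    constructor
    · -- stability
      intro a ha b hb hab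
      rw [hmem] at ha hb
      rcases ha with ⟨haX, haA⟩ | ⟨haY, haN⟩ <;> rcases hb with ⟨hbX, hbA⟩ | ⟨hbY, hbN⟩
      · exact Set.disjoint_left.1 hdisj hbX (adj_X_Y hdisj hbip haX hab)
      · exact hbN ⟨a, ⟨haX, haA⟩, hab⟩
      · exact haN ⟨b, ⟨hbX, hbA⟩, hab.symm⟩
      · exact Set.disjoint_left.1 hdisj (adj_Y_X hdisj hbip haY hab) hbY
    · -- maximality
      intro T' hT' hsub
      refine Finset.Subset.antisymm hsub fun v hv => ?_
      rw [hmem]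
      by_contra hvS
      have hvXY : v ∈ X ∪ Y := hcov ▸ Set.mem_univ v
      rcases hvXY with hvX | hvY
      · have hvA : v ∈ A := by
          by_contra hvA
          exact hvS (Or.inl ⟨hvX, hvA⟩)
        rw [hA] at hvA
        obtain ⟨y', hy', hadj⟩ := hvA
        have hy'W : y' ∈ W := by
          refine ⟨hY' hy', ?_⟩
          rintro ⟨t, ht, hty⟩
          exact ht.2 (hA ▸ ⟨y', hy', hty.symm⟩)
        have hy'T' : y' ∈ T' := hsub (by rw [hmem]; exact Or.inr hy'W)
        exact hT' y' hy'T' v hv hadj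
      · have hvN : v ∈ nbhdSet G T := by
          by_contra hvN
          exact hvS (Or.inr ⟨hvY, hvN⟩)
        obtain ⟨t, ht, htv⟩ := hvN
        exact hT' t (hsub (by rw [hmem]; exact Or.inl ht)) v hv htv
  refine ⟨S, hmax, ?_⟩
  rw [nbhd_eq_compl hdisj hbip hmax, hSc]
  ext a
  constructor
  · rintro ⟨haX, haTW⟩
    by_contra haA
    exact haTW (Or.inl ⟨haX, haA⟩)
  · intro haA
    have haX : a ∈ X := fam_subset_X hdisj hbip hY' hA haA
    refine ⟨haX, ?_⟩
    rintro (⟨-, hnA⟩ | ⟨haY, -⟩)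
    · exact hnA haA
    · exact Set.disjoint_left.1 hdisj haX haY

end aux

theorem stmt_2 {V : Type*} [Fintype V] [DecidableEq V] (G : SimpleGraph V) (X Y : Set V)
    (hdisj : Disjoint X Y) (hcov : X ∪ Y = Set.univ)
    (hbip : ∀ a b, G.Adj a b → (a ∈ X ∧ b ∈ Y) ∨ (a ∈ Y ∧ b ∈ X))
    (hiso : ∀ x ∈ X, ∃ y, G.Adj x y)
    (x : V) (hx : x ∈ X) :
    (2 * numMaxStableCont G x ≤ numMaxStable G) ↔
      (Set.ncard {A : Set V | ∃ Y' ⊆ Y, A = nbhdSet G Y'} ≤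
        2 * Set.ncard {A : Set V | (∃ Y' ⊆ Y, A = nbhdSet G Y') ∧ x ∈ A}) := by
  classical
  set Φ : Finset V → Set V := fun S => nbhdSet G (↑S ∩ Y) with hΦ
  set M : Set (Finset V) := {S | IsMaxStable G S} with hM
  set M2 : Set (Finset V) := {S | IsMaxStable G S ∧ x ∉ S} with hM2
  have hM2M : M2 ⊆ M := fun S hS => hS.1
  -- injectivity of Φ on M
  have hinj : Set.InjOn Φ M := by
    intro S1 h1 S2 h2 heq
    have hc1 := nbhd_eq_compl hdisj hbip h1
    have hc2 := nbhd_eq_compl hdisj hbip h2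
    have hdiff : X \ (↑S1 : Set V) = X \ ↑S2 := by rw [← hc1, ← hc2]; exact heq
    have hXeq : (↑S1 : Set V) ∩ X = ↑S2 ∩ X := by
      ext a
      simp only [Set.mem_inter_iff]
      constructor
      · rintro ⟨haS, haX⟩
        refine ⟨?_, haX⟩
        by_contra haS2
        have : a ∈ X \ (↑S1 : Set V) := hdiff ▸ ⟨haX, haS2⟩
        exact this.2 haS
      · rintro ⟨haS, haX⟩
        refine ⟨?_, haX⟩
        by_contra haS1
        have : a ∈ X \ (↑S2 : Set V) := hdiff ▸ ⟨haX, haS1⟩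
        exact this.2 haS
    have hYeq : (↑S1 : Set V) ∩ Y = ↑S2 ∩ Y := by
      rw [inter_Y_eq hdisj hbip h1, inter_Y_eq hdisj hbip h2, hXeq]
    have : (↑S1 : Set V) = ↑S2 := by
      ext v
      have hv : v ∈ X ∪ Y := hcov ▸ Set.mem_univ v
      rcases hv with hvX | hvY
      · constructor
        · intro h; exact ((Set.ext_iff.1 hXeq v).1 ⟨h, hvX⟩).1
        · intro h; exact ((Set.ext_iff.1 hXeq v).2 ⟨h, hvX⟩).1
      · constructor
        · intro h; exact ((Set.ext_iff.1 hYeq v).1 ⟨h, hvY⟩).1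
        · intro h; exact ((Set.ext_iff.1 hYeq v).2 ⟨h, hvY⟩).1
    exact_mod_cast this
  -- x-membership correspondence
  have hmemx : ∀ S ∈ M, (x ∈ Φ S ↔ x ∉ S) := by
    intro S hS
    rw [show Φ S = nbhdSet G (↑S ∩ Y) from rfl, nbhd_eq_compl hdisj hbip hS]
    constructor
    · exact fun h => h.2
    · exact fun h => ⟨hx, h⟩
  -- images
  have himg : Φ '' M = {A : Set V | ∃ Y' ⊆ Y, A = nbhdSet G Y'} := by
    ext A
    constructor
    · rintro ⟨S, hS, rfl⟩
      exact ⟨↑S ∩ Y, Set.inter_subset_right, rfl⟩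
    · rintro ⟨Y', hY', hA⟩
      obtain ⟨S, hS, hΦS⟩ := exists_maxStable hdisj hcov hbip hY' hA
      exact ⟨S, hS, hΦS⟩
  have himg2 : Φ '' M2 = {A : Set V | (∃ Y' ⊆ Y, A = nbhdSet G Y') ∧ x ∈ A} := by
    ext A
    constructor
    · rintro ⟨S, ⟨hS, hxS⟩, rfl⟩
      exact ⟨⟨↑S ∩ Y, Set.inter_subset_right, rfl⟩, (hmemx S hS).2 hxS⟩
    · rintro ⟨⟨Y', hY', hA⟩, hxA⟩
      obtain ⟨S, hS, hΦS⟩ := exists_maxStable hdisj hcov hbip hY' hA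
      have hAeq : Φ S = A := hΦS
      exact ⟨S, ⟨hS, (hmemx S hS).1 (hAeq ▸ hxA)⟩, hΦS⟩
  -- cardinalities
  have e1 : Set.ncard {A : Set V | ∃ Y' ⊆ Y, A = nbhdSet G Y'} = M.ncard := by
    rw [← himg]; exact Set.ncard_image_of_injOn hinj
  have e2 : Set.ncard {A : Set V | (∃ Y' ⊆ Y, A = nbhdSet G Y') ∧ x ∈ A} = M2.ncard := by
    rw [← himg2]; exact Set.ncard_image_of_injOn (hinj.mono hM2M)
  have hsplit : numMaxStable G = numMaxStableCont G x + M2.ncard := by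
    unfold numMaxStable numMaxStableCont
    rw [← Set.ncard_union_eq ?_ (Set.toFinite _) (Set.toFinite _)]
    · congr 1
      ext S
      simp only [Set.mem_setOf_eq, Set.mem_union, hM2]
      constructor
      · intro h
        by_cases hxS : x ∈ S
        · exact Or.inl ⟨h, hxS⟩
        · exact Or.inr ⟨h, hxS⟩
      · rintro (⟨h, -⟩ | ⟨h, -⟩) <;> exact h
    · rw [Set.disjoint_left]
      rintro S ⟨-, h1⟩ ⟨-, h2⟩
      exact h2 h1
  have e0 : M.ncard = numMaxStable G := rfl
  rw [e1, e2, e0, hsplit]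
  omega
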